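/- Let \((S,\varphi)\) be a Whittaker pair in a finite-dimensional Lie algebra \(\mathfrak{g}\) over a field of characteristic zero, let \(\mathfrak{u} = \mathfrak{g}^S_{\geq 1}\) and \(\mathfrak{n}_{S,\varphi} = \ker(\omega_\varphi|_{\mathfrak{u}})\). Then \(\mathfrak{n}_{S,\varphi}\) is a Lie ideal of \(\mathfrak{u}\), and the quotient \(\mathfrak{u}/\mathfrak{n}_{S,\varphi}\) is an abelian Lie algebra. -/

import Mathlib

/-- The `q`-eigenspace of `ad S`, for a rational number `q` (cast into `K`). -/
noncomputable def adE (K : Type*) {L : Type*} [Field K] [LieRing L] [LieAlgebra K L]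
    (S : L) (q : ℚ) : Submodule K L :=
  Module.End.eigenspace (LieAlgebra.ad K L S) (q : K)

/-- `𝔤^S_{≥ c}`: the sum of eigenspaces of `ad S` with (rational) eigenvalue `≥ c`. -/
noncomputable def gge (K : Type*) {L : Type*} [Field K] [LieRing L] [LieAlgebra K L]
    (S : L) (c : ℚ) : Submodule K L :=
  ⨆ q : ℚ, ⨆ _ : c ≤ q, adE K S q

/-- `𝔤^S_{> c}`: the sum of eigenspaces of `ad S` with (rational) eigenvalue `> c`. -/
noncomputable def ggt (K : Type*) {L : Type*} [Field K] [LieRing L] [LieAlgebra K L]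
    (S : L) (c : ℚ) : Submodule K L :=
  ⨆ q : ℚ, ⨆ _ : c < q, adE K S q

/-- `𝔤^S_{≤ c}`: the sum of eigenspaces of `ad S` with (rational) eigenvalue `≤ c`. -/
noncomputable def gle (K : Type*) {L : Type*} [Field K] [LieRing L] [LieAlgebra K L]
    (S : L) (c : ℚ) : Submodule K L :=
  ⨆ q : ℚ, ⨆ _ : q ≤ c, adE K S q

/-- `𝔤^S_{< c}`: the sum of eigenspaces of `ad S` with (rational) eigenvalue `< c`. -/
noncomputable def glt (K : Type*) {L : Type*} [Field K] [LieRing L] [LieAlgebra K L]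
    (S : L) (c : ℚ) : Submodule K L :=
  ⨆ q : ℚ, ⨆ _ : q < c, adE K S q

/-- `S` is rational semisimple: `ad S` is diagonalizable with rational eigenvalues. -/
def IsRatSS (K : Type*) {L : Type*} [Field K] [LieRing L] [LieAlgebra K L] (S : L) : Prop :=
  (⨆ q : ℚ, adE K S q) = ⊤

/-- The stabilizer `𝔤_φ` of `φ` under the coadjoint action:
all `X` with `φ ∘ ad X = 0`, i.e. `φ ⁅X, Y⁆ = 0` for all `Y`. -/
def coStab (K : Type*) {L : Type*} [Field K] [LieRing L] [LieAlgebra K L]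
    (φ : Module.Dual K L) : Submodule K L where
  carrier := {X | ∀ Y : L, φ ⁅X, Y⁆ = 0}
  add_mem' := by intro a b ha hb; intro Y; simp [add_lie, ha Y, hb Y]
  zero_mem' := by intro Y; simp
  smul_mem' := by intro c x hx; intro Y; simp [smul_lie, hx Y]

/-- `𝔫_{S,φ} = ker (ω_φ|_{𝔤^S_{≥1}})`, the radical of the form `ω_φ(X,Y) = φ ⁅X,Y⁆`
restricted to `𝔲 = 𝔤^S_{≥1}` (note `φ ⁅Y, X⁆ = 0` for all `Y ∈ 𝔲` iff
`φ ⁅X, Y⁆ = 0` for all `Y ∈ 𝔲`, by antisymmetry of the bracket). -/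
noncomputable def nSub (K : Type*) {L : Type*} [Field K] [LieRing L] [LieAlgebra K L]
    (S : L) (φ : Module.Dual K L) : Submodule K L :=
  gge K S 1 ⊓ ⨅ Y : (gge K S 1 : Submodule K L),
    LinearMap.ker (φ ∘ₗ LieAlgebra.ad K L (Y : L))


section Helpers

variable {K L : Type*} [Field K] [CharZero K] [LieRing L] [LieAlgebra K L]

lemma lie_adE_adE {S x y : L} {a b : ℚ} (hx : x ∈ adE K S a) (hy : y ∈ adE K S b) :
    ⁅x, y⁆ ∈ adE K S (a + b) := by
  rw [adE, Module.End.mem_eigenspace_iff] at *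
  simp only [LieAlgebra.ad_apply] at *
  rw [leibniz_lie, hx, hy]
  simp [smul_lie, lie_smul, add_smul]

lemma adE_le_gge {S : L} {c q : ℚ} (h : c ≤ q) : adE K S q ≤ gge K S c := by
  exact le_iSup_of_le q (le_iSup (fun _ : c ≤ q => adE K S q) h)

lemma gge_induction {S : L} {c : ℚ} {motive : L → Prop} (h0 : motive 0)
    (hadd : ∀ x y, motive x → motive y → motive (x + y))
    (heig : ∀ q, c ≤ q → ∀ x ∈ adE K S q, motive x) :
    ∀ x ∈ gge K S c, motive x := by
  intro x hx
  refine Submodule.iSup_induction (motive := motive) _ hx ?_ h0 hadd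
  intro q y hy
  by_cases h : c ≤ q
  · rw [iSup_pos h] at hy
    exact heig q h y hy
  · rw [iSup_neg h] at hy
    rw [(Submodule.mem_bot K).mp hy]
    exact h0

lemma lie_gge_gge {S : L} {a b : ℚ} :
    ∀ x ∈ gge K S a, ∀ y ∈ gge K S b, ⁅x, y⁆ ∈ gge K S (a + b) := by
  refine gge_induction (by simp) ?_ ?_
  · intro x x' hx hx' y hy
    rw [add_lie]; exact Submodule.add_mem _ (hx y hy) (hx' y hy)
  · intro q hq x hx
    refine gge_induction (by simp) ?_ ?_
    · intro y y' hy hy'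
      rw [lie_add]; exact Submodule.add_mem _ hy hy'
    · intro r hr y hy
      exact adE_le_gge (add_le_add hq hr) (lie_adE_adE hx hy)

lemma phi_gge_eq_zero {S : L} {φ : Module.Dual K L}
    (hpair : ∀ X : L, φ ⁅S, X⁆ = 2 * φ X) :
    ∀ x ∈ gge K S 3, φ x = 0 := by
  refine gge_induction (by simp) ?_ ?_
  · intro x y hx hy; rw [map_add, hx, hy, add_zero]
  · intro q hq x hx
    rw [adE, Module.End.mem_eigenspace_iff, LieAlgebra.ad_apply] at hx
    have h1 := hpair x
    rw [hx, map_smul, smul_eq_mul] at h1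
    have hq2 : ((q : K) - 2) * φ x = 0 := by ring_nf; linear_combination h1
    rcases mul_eq_zero.mp hq2 with h | h
    · exfalso
      have hq' : ((q : ℚ) : K) = ((2 : ℚ) : K) := by rw [sub_eq_zero] at h; simpa using h
      have : q = 2 := Rat.cast_injective hq'
      linarith
    · exact h

end Helpers

/-- For a Whittaker pair `(S, φ)` with `𝔲 = 𝔤^S_{≥1}` and
`𝔫_{S,φ} = ker (ω_φ|_𝔲)`, the subspace `𝔫_{S,φ}` is a Lie ideal of `𝔲` and the
quotient `𝔲 / 𝔫_{S,φ}` is abelian (i.e. `⁅𝔲, 𝔫_{S,φ}⁆ ⊆ 𝔫_{S,φ}` and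
`⁅𝔲, 𝔲⁆ ⊆ 𝔫_{S,φ}`). -/

theorem nSub_ideal_abelian_quotient
    {K L : Type*} [Field K] [CharZero K] [LieRing L] [LieAlgebra K L]
    [FiniteDimensional K L]
    (S : L) (φ : Module.Dual K L)
    (hS : IsRatSS K S) (hpair : ∀ X : L, φ ⁅S, X⁆ = 2 * φ X) :
    (∀ X ∈ gge K S 1, ∀ Y ∈ nSub K S φ, ⁅X, Y⁆ ∈ nSub K S φ) ∧
    (∀ X ∈ gge K S 1, ∀ Y ∈ gge K S 1, ⁅X, Y⁆ ∈ nSub K S φ) := by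
  have key : ∀ X ∈ gge K S 1, ∀ Y ∈ gge K S 1, ⁅X, Y⁆ ∈ nSub K S φ := by
    intro X hX Y hY
    rw [nSub, Submodule.mem_inf]
    constructor
    · have h2 : ⁅X, Y⁆ ∈ gge K S (1 + 1) := lie_gge_gge X hX Y hY
      refine gge_induction (Submodule.zero_mem _) (fun a b ha hb => Submodule.add_mem _ ha hb)
        (fun q hq x hx => adE_le_gge (by linarith) hx) _ h2
    · rw [Submodule.mem_iInf]
      intro Z
      rw [LinearMap.mem_ker, LinearMap.comp_apply, LieAlgebra.ad_apply]
      have h3 : ⁅(Z : L), ⁅X, Y⁆⁆ ∈ gge K S (1 + (1 + 1)) :=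
        lie_gge_gge (Z : L) Z.2 _ (lie_gge_gge X hX Y hY)
      have : (1 + (1 + 1) : ℚ) = 3 := by norm_num
      rw [this] at h3
      exact phi_gge_eq_zero hpair _ h3
  refine ⟨fun X hX Y hY => key X hX Y ?_, key⟩
  exact (Submodule.mem_inf.mp hY).1
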